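/- Let a_0 = 0 and a_n = 1 − e^{−16^{n+1}} for n ≥ 1, so that 1 − a_{n−1} = e^{−16^n} for n ≥ 2. For f ∈ L¹(Ω) and t > 0, the series g_t(f) = Σ_{n≥2} t · 16^n e^{−16^n t} dE_n(f) converges absolutely μ-a.e. and in L¹(Ω), and μ-almost everywhere on Ω: (7/60) · Σ_{n≥2} |dE_n(f)|² ≤ ∫₀^∞ |g_t(f)|² dt/t ≤ (23/60) · Σ_{n≥2} |dE_n(f)|². -/

import Mathlib

open MeasureTheory Filter Set Topology ENNReal

/-- `E_n(f)`: conditional expectation of `f` given `𝒜_n` for `n ≥ 1`, with `E_0 = 0`. -/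
noncomputable def condE {Ω : Type*} [m0 : MeasurableSpace Ω] (μ : Measure Ω)
    (F : ℕ → MeasurableSpace Ω) (f : Ω → ℝ) (n : ℕ) : Ω → ℝ :=
  if n = 0 then 0 else μ[f | F n]

/-- The martingale difference `dE_n(f) = E_n(f) - E_{n-1}(f)`. -/
noncomputable def dE {Ω : Type*} [m0 : MeasurableSpace Ω] (μ : Measure Ω)
    (F : ℕ → MeasurableSpace Ω) (f : Ω → ℝ) (n : ℕ) : Ω → ℝ :=
  fun ω => condE μ F f n ω - condE μ F f (n - 1) ω

/-- `g_t(f) = Σ_{n≥2} t·16ⁿ e^{-16ⁿ t} dE_n(f)`, the `g`-function integrand of the semigroup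
associated with the sequence `a_n = 1 - e^{-16^{n+1}}` (so that `1 - a_{n-1} = e^{-16ⁿ}`
for `n ≥ 2`). -/
noncomputable def gFun {Ω : Type*} [m0 : MeasurableSpace Ω] (μ : Measure Ω)
    (F : ℕ → MeasurableSpace Ω) (f : Ω → ℝ) (t : ℝ) : Ω → ℝ :=
  fun ω => ∑' n : ℕ, t * 16 ^ (n + 2) * Real.exp (-(16 ^ (n + 2) * t)) * dE μ F f (n + 2) ω

namespace Aux10
noncomputable def uu (n : ℕ) (t : ℝ) : ℝ := t * 16 ^ (n + 2) * Real.exp (-(16 ^ (n + 2) * t))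
noncomputable def lam (n : ℕ) : ℝ := 16 ^ (n + 2)
noncomputable def KK (m n : ℕ) : ℝ := lam m * lam n / (lam m + lam n) ^ 2

lemma lam_pos (n : ℕ) : 0 < lam n := by unfold lam; positivity
lemma uu_eq (n : ℕ) (t : ℝ) : uu n t = t * lam n * Real.exp (-(lam n * t)) := rfl
lemma continuous_uu (n : ℕ) : Continuous (uu n) := by
  unfold uu; fun_prop
lemma uu_nonneg (n : ℕ) {t : ℝ} (ht : 0 ≤ t) : 0 ≤ uu n t := by
  unfold uu; positivity

lemma kernel_integrableOn {r : ℝ} (hr : 0 < r) :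
    IntegrableOn (fun t : ℝ => t * Real.exp (-(r * t))) (Ioi 0) := by
  have := integrableOn_rpow_mul_exp_neg_mul_rpow (p := 1) (s := 1) (b := r)
    (by norm_num) zero_lt_one hr
  simpa [Real.rpow_one, neg_mul] using this

lemma kernel_integral {r : ℝ} (hr : 0 < r) :
    ∫ t in Ioi (0:ℝ), t * Real.exp (-(r * t)) = (r ^ 2)⁻¹ := by
  have h := Real.integral_rpow_mul_exp_neg_mul_Ioi (a := 2) (by norm_num) hr
  rw [show ((2:ℝ) - 1) = 1 by norm_num] at h
  simp only [Real.rpow_one] at h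
  rw [h, show ((2:ℝ)) = ((2:ℕ):ℝ) by norm_num, Real.rpow_natCast,
    show ((2:ℕ):ℝ) = 2 by norm_num, Real.Gamma_two]
  field_simp

lemma pair_eq (m n : ℕ) {t : ℝ} (ht : t ≠ 0) :
    uu m t * uu n t / t = (lam m * lam n) * (t * Real.exp (-((lam m + lam n) * t))) := by
  rw [uu_eq, uu_eq, show -((lam m + lam n) * t) = -(lam m * t) + -(lam n * t) by ring,
    Real.exp_add]
  field_simp

lemma pair_integrableOn (m n : ℕ) :
    IntegrableOn (fun t => uu m t * uu n t / t) (Ioi 0) := by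
  have h : IntegrableOn
      (fun t => (lam m * lam n) * (t * Real.exp (-((lam m + lam n) * t)))) (Ioi 0) :=
    (kernel_integrableOn (by have := lam_pos m; have := lam_pos n; linarith)).const_mul _
  exact h.congr_fun (fun t ht => (pair_eq m n (ne_of_gt ht)).symm) measurableSet_Ioi

lemma pair_integral (m n : ℕ) :
    ∫ t in Ioi (0:ℝ), uu m t * uu n t / t = KK m n := by
  have hpos : (0:ℝ) < lam m + lam n := by have := lam_pos m; have := lam_pos n; linarith
  rw [setIntegral_congr_fun measurableSet_Ioi (fun t ht => pair_eq m n (ne_of_gt ht)),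
    integral_const_mul, kernel_integral hpos]
  rw [KK, div_eq_mul_inv]

lemma KK_nonneg (m n : ℕ) : 0 ≤ KK m n := by
  unfold KK lam; positivity

lemma KK_symm (m n : ℕ) : KK m n = KK n m := by
  unfold KK; rw [mul_comm (lam m), add_comm (lam m)]

lemma KK_diag (n : ℕ) : KK n n = 1 / 4 := by
  have := (lam_pos n).ne'
  unfold KK
  rw [show lam n + lam n = 2 * lam n by ring, mul_pow]
  rw [show lam n * lam n = lam n ^ 2 by ring]
  rw [mul_comm ((2:ℝ)^2), div_mul_eq_div_div, div_self (by positivity)]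
  norm_num

lemma KK_le {m n : ℕ} (h : m ≤ n) : KK m n ≤ (1/16 : ℝ) ^ (n - m) := by
  have hm := lam_pos m; have hn := lam_pos n
  have h1 : KK m n ≤ lam m / lam n := by
    rw [KK, div_le_div_iff₀ (by positivity) hn]
    have h2 : lam n ^ 2 ≤ (lam m + lam n) ^ 2 := by nlinarith
    nlinarith
  refine h1.trans ?_
  have hlam : lam n = lam m * 16 ^ (n - m) := by
    unfold lam
    rw [← pow_add]
    congr 1
    omega
  rw [hlam, one_div, inv_pow]
  rw [div_eq_mul_inv, mul_inv, ← mul_assoc, mul_inv_cancel₀ hm.ne', one_mul]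


lemma uu_pos (n : ℕ) {t : ℝ} (ht : 0 < t) : 0 < uu n t := by
  unfold uu; positivity

lemma uu_succ (n : ℕ) (t : ℝ) :
    uu (n + 1) t = uu n t * (16 * Real.exp (-(15 * 16 ^ (n + 2) * t))) := by
  unfold uu
  rw [show n + 1 + 2 = (n + 2) + 1 by ring, pow_succ,
    show -((16:ℝ) ^ (n + 2) * 16 * t) = -(16 ^ (n+2) * t) + -(15 * 16 ^ (n + 2) * t) by ring,
    Real.exp_add]
  ring

lemma summable_uu {t : ℝ} (ht : 0 < t) : Summable fun n => uu n t := by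
  apply summable_of_ratio_norm_eventually_le (r := 1/2) (by norm_num)
  have htend : Tendsto (fun n : ℕ => 15 * (16:ℝ) ^ (n + 2) * t) atTop atTop := by
    apply Tendsto.atTop_mul_const ht
    apply Tendsto.const_mul_atTop (by norm_num : (0:ℝ) < 15)
    exact (tendsto_pow_atTop_atTop_of_one_lt (by norm_num : (1:ℝ) < 16)).comp
      (tendsto_add_atTop_nat 2)
  filter_upwards [htend.eventually_ge_atTop (Real.log 32)] with n hn
  have hpos := uu_pos n ht
  have hexp : Real.exp (-(15 * 16 ^ (n + 2) * t)) ≤ 1 / 32 := by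
    rw [show (1:ℝ)/32 = Real.exp (Real.log (1/32)) by
      rw [Real.exp_log]; norm_num]
    apply Real.exp_le_exp.2
    rw [Real.log_div one_ne_zero (by norm_num), Real.log_one]
    linarith
  rw [Real.norm_eq_abs, Real.norm_eq_abs, abs_of_pos (uu_pos _ ht), abs_of_pos hpos, uu_succ]
  have : 16 * Real.exp (-(15 * 16 ^ (n + 2) * t)) ≤ 1/2 := by nlinarith [Real.exp_pos (-(15 * 16 ^ (n + 2) * t))]
  calc uu n t * (16 * Real.exp (-(15 * 16 ^ (n + 2) * t))) ≤ uu n t * (1/2) := by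
        exact mul_le_mul_of_nonneg_left this hpos.le
    _ = 1/2 * uu n t := by ring

lemma summable_abs_term {b : ℕ → ℝ} {C : ℝ} (hC : ∀ n, |b n| ≤ C) {t : ℝ} (ht : 0 < t) :
    Summable fun n => |uu n t * b n| := by
  apply Summable.of_nonneg_of_le (fun n => abs_nonneg _)
    (fun n => ?_) ((summable_uu ht).mul_left C)
  rw [abs_mul, abs_of_pos (uu_pos n ht)]
  calc uu n t * |b n| ≤ uu n t * C := by
        exact mul_le_mul_of_nonneg_left ((hC n).trans le_rfl) (uu_pos n ht).le
    _ = C * uu n t := by ring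

lemma summable_term {b : ℕ → ℝ} {C : ℝ} (hC : ∀ n, |b n| ≤ C) {t : ℝ} (ht : 0 < t) :
    Summable fun n => uu n t * b n :=
  (summable_abs_term hC ht).of_abs

lemma geo_tail_sum : ∑' k : ℕ, (1/16 : ℝ) ^ (k + 1) = 1 / 15 := by
  have h : ∀ k : ℕ, (1/16 : ℝ) ^ (k+1) = (1/16) * (1/16)^k := fun k => by rw [pow_succ]; ring
  rw [tsum_congr h, tsum_mul_left, tsum_geometric_of_lt_one (by norm_num) (by norm_num)]
  norm_num

lemma summable_geo_succ : Summable fun k : ℕ => (1/16 : ℝ) ^ (k + 1) := by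
  have h : Summable fun k : ℕ => (1/16 : ℝ) ^ k :=
    summable_geometric_of_lt_one (by norm_num) (by norm_num)
  exact (h.mul_left (1/16)).congr (fun k => by rw [pow_succ]; ring)

lemma geo_partial_le (N : ℕ) : ∑ k ∈ Finset.range N, (1/16 : ℝ) ^ (k + 1) ≤ 1 / 15 := by
  rw [← geo_tail_sum]
  exact Summable.sum_le_tsum _ (fun k _ => by positivity) summable_geo_succ

lemma reflect_sum_le (N : ℕ) : ∑ n ∈ Finset.range N, (1/16 : ℝ) ^ (N - n) ≤ 1 / 15 := by
  have h := Finset.sum_range_reflect (fun k => (1/16 : ℝ) ^ (k + 1)) N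
  have he : ∀ n ∈ Finset.range N, (1/16:ℝ) ^ (N - 1 - n + 1) = (1/16) ^ (N - n) := by
    intro n hn
    rw [Finset.mem_range] at hn
    congr 1
    omega
  rw [Finset.sum_congr rfl he] at h
  rw [h]
  exact geo_partial_le N


lemma sum_e_le (m N : ℕ) :
    ∑ n ∈ Finset.range N, (if n = m then 0 else KK m n) ≤ 2 / 15 := by
  classical
  have hsplit := Finset.sum_filter_add_sum_filter_not (Finset.range N) (· < m)
    (fun n => if n = m then 0 else KK m n)
  rw [← hsplit]
  have h1 : ∑ n ∈ (Finset.range N).filter (· < m), (if n = m then 0 else KK m n) ≤ 1/15 := by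
    have hsub : (Finset.range N).filter (· < m) ⊆ Finset.range m := by
      intro n hn; rw [Finset.mem_filter] at hn; exact Finset.mem_range.2 hn.2
    have hle1 : ∑ n ∈ (Finset.range N).filter (· < m), (if n = m then 0 else KK m n)
        ≤ ∑ n ∈ (Finset.range N).filter (· < m), (1/16 : ℝ) ^ (m - n) := by
      apply Finset.sum_le_sum
      intro n hn
      rw [Finset.mem_filter] at hn
      rw [if_neg (by omega), KK_symm]
      exact KK_le hn.2.le
    have hle2 : ∑ n ∈ (Finset.range N).filter (· < m), (1/16 : ℝ) ^ (m - n)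
        ≤ ∑ n ∈ Finset.range m, (1/16:ℝ) ^ (m - n) :=
      Finset.sum_le_sum_of_subset_of_nonneg hsub (fun n _ _ => by positivity)
    exact (hle1.trans hle2).trans (reflect_sum_le m)
  have h2 : ∑ n ∈ (Finset.range N).filter (fun n => ¬ n < m), (if n = m then 0 else KK m n)
      ≤ 1/15 := by
    have hstep : ∀ n ∈ (Finset.range N).filter (fun n => ¬ n < m),
        (if n = m then 0 else KK m n) ≤ (if m < n then (1/16:ℝ) ^ (n - m) else 0) := by
      intro n hn
      rw [Finset.mem_filter] at hn
      by_cases h : n = m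
      · simp [h]
      · rw [if_neg h, if_pos (by omega)]
        exact KK_le (by omega)
    refine (Finset.sum_le_sum hstep).trans ?_
    rw [← Finset.sum_filter]
    have hsub : ((Finset.range N).filter (fun n => ¬ n < m)).filter (fun n => m < n)
        ⊆ Finset.image (fun k => k + (m + 1)) (Finset.range N) := by
      intro n hn
      simp only [Finset.mem_filter, Finset.mem_range] at hn
      simp only [Finset.mem_image, Finset.mem_range]
      exact ⟨n - (m + 1), by omega, by omega⟩
    refine (Finset.sum_le_sum_of_subset_of_nonneg hsub (fun n _ _ => by positivity)).trans ?_
    rw [Finset.sum_image (fun a _ b _ h => by omega)]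
    have : ∀ k ∈ Finset.range N, (1/16:ℝ) ^ (k + (m+1) - m) = (1/16)^(k+1) := by
      intro k _; congr 1; omega
    rw [Finset.sum_congr rfl this]
    exact geo_partial_le N
  linarith

lemma abs_mul_abs_le_half (x y : ℝ) : |x| * |y| ≤ (x^2 + y^2)/2 := by
  nlinarith [sq_nonneg (|x| - |y|), sq_abs x, sq_abs y]

lemma form_bound (b : ℕ → ℝ) (N : ℕ) :
    |(∑ m ∈ Finset.range N, ∑ n ∈ Finset.range N, b m * b n * KK m n)
      - (1/4) * ∑ n ∈ Finset.range N, (b n)^2|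
      ≤ (2/15) * ∑ n ∈ Finset.range N, (b n)^2 := by
  classical
  have hQ : (∑ m ∈ Finset.range N, ∑ n ∈ Finset.range N, b m * b n * KK m n)
      - (1/4) * ∑ n ∈ Finset.range N, (b n)^2
      = ∑ m ∈ Finset.range N, ∑ n ∈ Finset.range N,
          (if n = m then 0 else b m * b n * KK m n) := by
    have hper : ∀ m ∈ Finset.range N, ∑ n ∈ Finset.range N, b m * b n * KK m n
        = (∑ n ∈ Finset.range N, (if n = m then 0 else b m * b n * KK m n))
          + (1/4) * (b m)^2 := by
      intro m hm
      have : ∀ n ∈ Finset.range N, b m * b n * KK m n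
          = (if n = m then 0 else b m * b n * KK m n)
            + (if n = m then (1/4) * (b m)^2 else 0) := by
        intro n _
        by_cases h : n = m
        · subst h; rw [if_pos rfl, if_pos rfl, KK_diag]; ring
        · rw [if_neg h, if_neg h]; ring
      rw [Finset.sum_congr rfl this, Finset.sum_add_distrib, Finset.sum_ite_eq' (Finset.range N)]
      rw [if_pos hm]
    rw [Finset.sum_congr rfl hper, Finset.sum_add_distrib, ← Finset.mul_sum]
    ring
  rw [hQ]
  have habs : |∑ m ∈ Finset.range N, ∑ n ∈ Finset.range N,
      (if n = m then 0 else b m * b n * KK m n)|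
      ≤ ∑ m ∈ Finset.range N, ∑ n ∈ Finset.range N,
          (b m)^2 * (if n = m then 0 else KK m n) := by
    refine (Finset.abs_sum_le_sum_abs _ _).trans ?_
    have step1 : ∀ m ∈ Finset.range N,
        |∑ n ∈ Finset.range N, (if n = m then 0 else b m * b n * KK m n)|
        ≤ ∑ n ∈ Finset.range N, ((b m)^2 + (b n)^2)/2 * (if n = m then 0 else KK m n) := by
      intro m _
      refine (Finset.abs_sum_le_sum_abs _ _).trans (Finset.sum_le_sum fun n _ => ?_)
      by_cases h : n = m
      · simp [h]
      · rw [if_neg h, if_neg h, abs_mul, abs_mul, abs_of_nonneg (KK_nonneg m n)]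
        exact mul_le_mul_of_nonneg_right (abs_mul_abs_le_half _ _) (KK_nonneg m n)
    refine (Finset.sum_le_sum step1).trans ?_
    -- symmetrize
    have hsymm : ∑ m ∈ Finset.range N, ∑ n ∈ Finset.range N,
        ((b m)^2 + (b n)^2)/2 * (if n = m then 0 else KK m n)
        = ∑ m ∈ Finset.range N, ∑ n ∈ Finset.range N,
            (b m)^2 * (if n = m then 0 else KK m n) := by
      have hsplit : ∀ m n : ℕ, ((b m)^2 + (b n)^2)/2 * (if n = m then 0 else KK m n)
          = (b m)^2/2 * (if n = m then 0 else KK m n)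
            + (b n)^2/2 * (if n = m then 0 else KK m n) := by
        intro m n; ring
      simp_rw [hsplit, Finset.sum_add_distrib]
      have hswap : ∑ m ∈ Finset.range N, ∑ n ∈ Finset.range N,
          (b n)^2/2 * (if n = m then 0 else KK m n)
          = ∑ m ∈ Finset.range N, ∑ n ∈ Finset.range N,
              (b m)^2/2 * (if n = m then 0 else KK m n) := by
        rw [Finset.sum_comm]
        apply Finset.sum_congr rfl; intro m _
        apply Finset.sum_congr rfl; intro n _
        rw [KK_symm]
        by_cases h : n = m
        · subst h; simp
        · rw [if_neg h, if_neg (fun hh => h hh.symm)]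
      rw [hswap, ← Finset.sum_add_distrib]
      apply Finset.sum_congr rfl; intro m _
      rw [← Finset.sum_add_distrib]
      apply Finset.sum_congr rfl; intro n _
      ring
    exact le_of_eq hsymm
  refine habs.trans ?_
  rw [Finset.mul_sum]
  apply Finset.sum_le_sum
  intro m _
  rw [← Finset.mul_sum]
  rw [mul_comm ((2:ℝ)/15)]
  exact mul_le_mul_of_nonneg_left (sum_e_le m N) (sq_nonneg _)


noncomputable def SN (b : ℕ → ℝ) (N : ℕ) (t : ℝ) : ℝ := ∑ n ∈ Finset.range N, uu n t * b n

noncomputable def QN (b : ℕ → ℝ) (N : ℕ) : ℝ :=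
  ∑ m ∈ Finset.range N, ∑ n ∈ Finset.range N, b m * b n * KK m n

lemma SN_sq_eq (b : ℕ → ℝ) (N : ℕ) (t : ℝ) :
    (SN b N t)^2 / t = ∑ m ∈ Finset.range N, ∑ n ∈ Finset.range N,
      (b m * b n) * (uu m t * uu n t / t) := by
  rw [SN, sq, Finset.sum_mul_sum, Finset.sum_div]
  apply Finset.sum_congr rfl; intro m _
  rw [Finset.sum_div]
  apply Finset.sum_congr rfl; intro n _
  ring

lemma SN_sq_integrableOn (b : ℕ → ℝ) (N : ℕ) :
    IntegrableOn (fun t => (SN b N t)^2 / t) (Ioi 0) := by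
  have : IntegrableOn (fun t => ∑ m ∈ Finset.range N, ∑ n ∈ Finset.range N,
      (b m * b n) * (uu m t * uu n t / t)) (Ioi 0) := by
    apply MeasureTheory.integrable_finset_sum
    intro m _
    apply MeasureTheory.integrable_finset_sum
    intro n _
    exact (pair_integrableOn m n).const_mul _
  exact this.congr_fun (fun t _ => (SN_sq_eq b N t).symm) measurableSet_Ioi

lemma Q_integral (b : ℕ → ℝ) (N : ℕ) :
    ∫ t in Ioi (0:ℝ), (SN b N t)^2 / t = QN b N := by
  rw [MeasureTheory.setIntegral_congr_fun measurableSet_Ioi (fun t _ => SN_sq_eq b N t)]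
  rw [MeasureTheory.integral_finset_sum _ (fun m _ => MeasureTheory.integrable_finset_sum _
    (fun n _ => (pair_integrableOn m n).const_mul _))]
  apply Finset.sum_congr rfl; intro m _
  rw [MeasureTheory.integral_finset_sum _ (fun n _ => (pair_integrableOn m n).const_mul _)]
  apply Finset.sum_congr rfl; intro n _
  rw [integral_const_mul, pair_integral]

lemma Q_lintegral (b : ℕ → ℝ) (N : ℕ) :
    ∫⁻ t in Ioi (0:ℝ), ENNReal.ofReal ((SN b N t)^2 / t) = ENNReal.ofReal (QN b N) := by
  rw [← Q_integral b N]
  refine (MeasureTheory.ofReal_integral_eq_lintegral_ofReal (SN_sq_integrableOn b N) ?_).symm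
  exact (ae_restrict_iff' measurableSet_Ioi).2 (ae_of_all _ fun t ht =>
    div_nonneg (sq_nonneg _) (le_of_lt ht))

lemma pair_lintegral (m n : ℕ) {c : ℝ} (hc : 0 ≤ c) :
    ∫⁻ t in Ioi (0:ℝ), ENNReal.ofReal (c * (uu m t * uu n t / t))
      = ENNReal.ofReal (c * KK m n) := by
  have hint := (pair_integrableOn m n).const_mul c
  rw [← MeasureTheory.ofReal_integral_eq_lintegral_ofReal hint
    ((ae_restrict_iff' measurableSet_Ioi).2 (ae_of_all _ fun t ht => by
      have ht' : (0:ℝ) < t := ht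
      have h1 : 0 ≤ uu m t * uu n t / t :=
        div_nonneg (mul_nonneg (uu_nonneg m ht'.le) (uu_nonneg n ht'.le)) ht'.le
      exact mul_nonneg hc h1))]
  rw [integral_const_mul, pair_integral]

noncomputable def rho (b : ℕ → ℝ) (N : ℕ) : ℝ := ∑' j : ℕ, |b (j + N)| * (1/16 : ℝ) ^ j

lemma summable_rho_aux {b : ℕ → ℝ} {C : ℝ} (hC : ∀ n, |b n| ≤ C) (N : ℕ) :
    Summable fun j : ℕ => |b (j + N)| * (1/16 : ℝ) ^ j := by
  have hg : Summable fun j : ℕ => (1/16 : ℝ) ^ j :=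
    summable_geometric_of_lt_one (by norm_num) (by norm_num)
  apply Summable.of_nonneg_of_le (fun j => by positivity) (fun j => ?_) (hg.mul_left C)
  exact mul_le_mul_of_nonneg_right (hC _) (by positivity)

lemma rho_nonneg (b : ℕ → ℝ) (N : ℕ) : 0 ≤ rho b N :=
  tsum_nonneg (fun j => by positivity)

lemma rho_tendsto {b : ℕ → ℝ} {C : ℝ} (hC : ∀ n, |b n| ≤ C)
    (hb : Tendsto b atTop (𝓝 0)) : Tendsto (rho b) atTop (𝓝 0) := by
  rw [Metric.tendsto_atTop]
  intro ε hε
  rw [Metric.tendsto_atTop] at hb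
  obtain ⟨N₀, hN₀⟩ := hb (ε/4) (by linarith)
  refine ⟨N₀, fun N hN => ?_⟩
  have hbound : rho b N ≤ (ε/4) * (16/15) := by
    have hle : ∀ j : ℕ, |b (j + N)| * (1/16:ℝ)^j ≤ (ε/4) * (1/16)^j := by
      intro j
      apply mul_le_mul_of_nonneg_right _ (by positivity)
      have := hN₀ (j + N) (by omega)
      rw [Real.dist_eq, sub_zero] at this
      exact this.le
    have hg : Summable fun j : ℕ => (1/16 : ℝ) ^ j :=
      summable_geometric_of_lt_one (by norm_num) (by norm_num)
    have := Summable.tsum_le_tsum hle (summable_rho_aux hC N) (hg.mul_left (ε/4))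
    rw [tsum_mul_left, tsum_geometric_of_lt_one (by norm_num) (by norm_num)] at this
    rw [show ((1:ℝ) - 1/16)⁻¹ = 16/15 by norm_num] at this
    exact this
  rw [Real.dist_eq, sub_zero, abs_of_nonneg (rho_nonneg b N)]
  calc rho b N ≤ (ε/4) * (16/15) := hbound
    _ < ε := by linarith


noncomputable def gg (b : ℕ → ℝ) (t : ℝ) : ℝ := ∑' n : ℕ, uu n t * b n

lemma continuous_SN (b : ℕ → ℝ) (N : ℕ) : Continuous (SN b N) := by
  unfold SN
  exact continuous_finset_sum _ (fun n _ => (continuous_uu n).mul continuous_const)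

lemma measurable_FN (b : ℕ → ℝ) (N : ℕ) :
    Measurable fun t => ENNReal.ofReal ((SN b N t)^2 / t) :=
  ((((continuous_SN b N).pow 2).measurable).div measurable_id).ennreal_ofReal

lemma ofReal_frac (x y : ℕ) (hy : 0 < (y:ℝ)) : ENNReal.ofReal ((x : ℝ)/(y:ℝ)) = (x : ℝ≥0∞) / (y : ℝ≥0∞) := by
  rw [ENNReal.ofReal_div_of_pos hy, ENNReal.ofReal_natCast, ENNReal.ofReal_natCast]

lemma sN_ofReal_le (b : ℕ → ℝ) (N : ℕ) :
    ENNReal.ofReal (∑ n ∈ Finset.range N, (b n)^2) ≤ ∑' n : ℕ, ENNReal.ofReal ((b n)^2) := by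
  rw [ENNReal.ofReal_sum_of_nonneg (fun n _ => sq_nonneg _)]
  exact ENNReal.sum_le_tsum _

lemma core_upper {b : ℕ → ℝ} {C : ℝ} (hC : ∀ n, |b n| ≤ C) :
    ∫⁻ t in Ioi (0:ℝ), ENNReal.ofReal ((gg b t)^2 / t)
      ≤ (23/60 : ℝ≥0∞) * ∑' n : ℕ, ENNReal.ofReal ((b n)^2) := by
  have hcongr : ∫⁻ t in Ioi (0:ℝ), ENNReal.ofReal ((gg b t)^2 / t)
      = ∫⁻ t in Ioi (0:ℝ), Filter.liminf (fun N => ENNReal.ofReal ((SN b N t)^2 / t)) atTop := by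
    apply setLIntegral_congr_fun measurableSet_Ioi
    intro t ht
    have ht' : (0:ℝ) < t := ht
    have htend : Tendsto (fun N => ENNReal.ofReal ((SN b N t)^2 / t)) atTop
        (𝓝 (ENNReal.ofReal ((gg b t)^2 / t))) := by
      apply ENNReal.tendsto_ofReal
      exact (((summable_term hC ht').hasSum.tendsto_sum_nat.pow 2).div_const t)
    exact htend.liminf_eq.symm
  rw [hcongr]
  refine (lintegral_liminf_le (fun N => measurable_FN b N)).trans ?_
  have hbd : ∀ N : ℕ, ∫⁻ t in Ioi (0:ℝ), ENNReal.ofReal ((SN b N t)^2 / t)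
      ≤ (23/60 : ℝ≥0∞) * ∑' n : ℕ, ENNReal.ofReal ((b n)^2) := by
    intro N
    rw [Q_lintegral b N]
    have h1 : QN b N ≤ (23/60) * ∑ n ∈ Finset.range N, (b n)^2 := by
      have := (abs_le.1 (form_bound b N)).2
      have hs : 0 ≤ ∑ n ∈ Finset.range N, (b n)^2 :=
        Finset.sum_nonneg (fun n _ => sq_nonneg _)
      rw [QN]
      linarith
    refine (ENNReal.ofReal_le_ofReal h1).trans ?_
    rw [ENNReal.ofReal_mul (by norm_num)]
    have h23 : ENNReal.ofReal ((23:ℝ)/60) = (23/60 : ℝ≥0∞) := by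
      rw [show ((23:ℝ)/60) = ((23:ℕ):ℝ)/((60:ℕ):ℝ) by norm_num, ofReal_frac _ _ (by norm_num)]
      norm_num
    rw [h23]
    exact mul_le_mul_right (sN_ofReal_le b N) _
  exact Filter.liminf_le_of_frequently_le' (Filter.Frequently.of_forall hbd)


lemma term_nonneg (n m : ℕ) {t : ℝ} (ht : 0 < t) (c : ℝ) (hc : 0 ≤ c) :
    0 ≤ c * (uu n t * uu m t / t) :=
  mul_nonneg hc (div_nonneg (mul_nonneg (uu_nonneg n ht.le) (uu_nonneg m ht.le)) ht.le)

noncomputable def HH (b : ℕ → ℝ) (N : ℕ) (t : ℝ) : ℝ≥0∞ :=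
  ∑ n ∈ Finset.range N, ∑' j : ℕ,
    ENNReal.ofReal (2 * |b n| * |b (j + N)| * (uu n t * uu (j + N) t / t))

lemma measurable_HH (b : ℕ → ℝ) (N : ℕ) : Measurable (HH b N) := by
  apply Finset.measurable_sum
  intro n _
  apply Measurable.ennreal_tsum
  intro j
  exact ((((continuous_uu n).mul (continuous_uu (j + N))).measurable.div
    measurable_id).const_mul _).ennreal_ofReal

lemma measurable_pairterm (n m : ℕ) (c : ℝ) :
    Measurable fun t : ℝ => ENNReal.ofReal (c * (uu n t * uu m t / t)) := by
  apply Measurable.ennreal_ofReal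
  exact (((continuous_uu n).measurable.mul (continuous_uu m).measurable).div
    measurable_id).const_mul c

lemma core_lower {b : ℕ → ℝ} {C : ℝ} (hC : ∀ n, |b n| ≤ C)
    (hb : Tendsto b atTop (𝓝 0)) :
    (7/60 : ℝ≥0∞) * ∑' n : ℕ, ENNReal.ofReal ((b n)^2)
      ≤ ∫⁻ t in Ioi (0:ℝ), ENNReal.ofReal ((gg b t)^2 / t) := by
  have hC0 : 0 ≤ C := (abs_nonneg _).trans (hC 0)
  set I := ∫⁻ t in Ioi (0:ℝ), ENNReal.ofReal ((gg b t)^2 / t) with hI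
  -- integral of HH
  have hHH_int : ∀ N : ℕ, ∫⁻ t in Ioi (0:ℝ), HH b N t
      ≤ ENNReal.ofReal ((2*C/15) * rho b N) := by
    intro N
    have hmeas : ∀ n : ℕ, Measurable fun t => (∑' j : ℕ,
        ENNReal.ofReal (2 * |b n| * |b (j + N)| * (uu n t * uu (j + N) t / t))) := by
      intro n
      apply Measurable.ennreal_tsum
      intro j
      exact ((((continuous_uu n).mul (continuous_uu (j + N))).measurable.div
        measurable_id).const_mul _).ennreal_ofReal
    simp only [HH]
    rw [lintegral_finset_sum _ (fun n _ => hmeas n)]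
    have hper : ∀ n ∈ Finset.range N, (∫⁻ t in Ioi (0:ℝ), ∑' j : ℕ,
        ENNReal.ofReal (2 * |b n| * |b (j + N)| * (uu n t * uu (j + N) t / t)))
        ≤ ENNReal.ofReal (2 * |b n| * (1/16:ℝ)^(N - n) * rho b N) := by
      intro n hn
      rw [Finset.mem_range] at hn
      rw [lintegral_tsum (fun j => (measurable_pairterm n (j + N)
        (2 * |b n| * |b (j + N)|)).aemeasurable)]
      have hpl : ∀ j : ℕ, ∫⁻ t in Ioi (0:ℝ),
          ENNReal.ofReal (2 * |b n| * |b (j + N)| * (uu n t * uu (j + N) t / t))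
          = ENNReal.ofReal (2 * |b n| * |b (j + N)| * KK n (j + N)) := fun j =>
        pair_lintegral n (j + N) (by positivity)
      rw [tsum_congr hpl]
      -- real sums
      have hynn : ∀ j : ℕ, 0 ≤ 2 * |b n| * |b (j + N)| * KK n (j + N) := by
        intro j
        have := KK_nonneg n (j + N); positivity
      have hy_summable : Summable fun j : ℕ =>
          (2 * |b n| * (1/16:ℝ)^(N - n)) * (|b (j + N)| * (1/16:ℝ)^j) :=
        (summable_rho_aux hC N).mul_left _
      have hxy : ∀ j : ℕ, 2 * |b n| * |b (j + N)| * KK n (j + N)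
          ≤ (2 * |b n| * (1/16:ℝ)^(N - n)) * (|b (j + N)| * (1/16:ℝ)^j) := by
        intro j
        have hK : KK n (j + N) ≤ (1/16:ℝ)^(N - n) * (1/16:ℝ)^j := by
          have h1 : KK n (j + N) ≤ (1/16:ℝ)^(j + N - n) := KK_le (by omega)
          rw [← pow_add]
          refine h1.trans_eq ?_
          congr 1
          omega
        calc 2 * |b n| * |b (j + N)| * KK n (j + N)
            ≤ 2 * |b n| * |b (j + N)| * ((1/16:ℝ)^(N - n) * (1/16:ℝ)^j) := by
              apply mul_le_mul_of_nonneg_left hK (by positivity)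
          _ = (2 * |b n| * (1/16:ℝ)^(N - n)) * (|b (j + N)| * (1/16:ℝ)^j) := by ring
      have hx_summable : Summable fun j : ℕ => 2 * |b n| * |b (j + N)| * KK n (j + N) :=
        Summable.of_nonneg_of_le hynn hxy hy_summable
      rw [← ENNReal.ofReal_tsum_of_nonneg hynn hx_summable]
      apply ENNReal.ofReal_le_ofReal
      refine (Summable.tsum_le_tsum hxy hx_summable hy_summable).trans ?_
      rw [tsum_mul_left]
      rw [show (∑' j : ℕ, |b (j + N)| * (1/16:ℝ)^j) = rho b N from rfl]
    refine (Finset.sum_le_sum hper).trans ?_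
    rw [← ENNReal.ofReal_sum_of_nonneg (fun n _ => by
      have := rho_nonneg b N; positivity)]
    apply ENNReal.ofReal_le_ofReal
    have hterm : ∀ n ∈ Finset.range N, 2 * |b n| * (1/16:ℝ)^(N - n) * rho b N
        ≤ (2 * C * rho b N) * (1/16:ℝ)^(N - n) := by
      intro n _
      have h1 := rho_nonneg b N
      have h2 := hC n
      have h3 := abs_nonneg (b n)
      have h4 : (0:ℝ) ≤ (1/16:ℝ)^(N - n) := by positivity
      calc 2 * |b n| * (1/16:ℝ)^(N - n) * rho b N
          ≤ 2 * C * (1/16:ℝ)^(N - n) * rho b N := by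
            apply mul_le_mul_of_nonneg_right _ h1
            apply mul_le_mul_of_nonneg_right _ h4
            linarith
        _ = (2 * C * rho b N) * (1/16:ℝ)^(N - n) := by ring
    refine (Finset.sum_le_sum hterm).trans ?_
    rw [← Finset.mul_sum]
    have := reflect_sum_le N
    have h1 := rho_nonneg b N
    calc (2 * C * rho b N) * ∑ n ∈ Finset.range N, (1/16:ℝ)^(N - n)
        ≤ (2 * C * rho b N) * (1/15) := by
          apply mul_le_mul_of_nonneg_left this (by positivity)
      _ = (2*C/15) * rho b N := by ring
  -- pointwise bound
  have hpoint : ∀ N : ℕ, ∀ t ∈ Ioi (0:ℝ),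
      ENNReal.ofReal ((SN b N t)^2 / t)
        ≤ ENNReal.ofReal ((gg b t)^2 / t) + HH b N t := by
    intro N t ht
    have ht' : (0:ℝ) < t := ht
    have hsum : Summable fun n => uu n t * b n := summable_term hC ht'
    have hshift : Summable fun j => uu (j + N) t * b (j + N) :=
      (summable_nat_add_iff N).2 hsum
    set R := ∑' j : ℕ, uu (j + N) t * b (j + N) with hR
    have hg : gg b t = SN b N t + R := (Summable.sum_add_tsum_nat_add N hsum).symm
    have habs_shift : Summable fun j => uu (j + N) t * |b (j + N)| := by
      have := (summable_nat_add_iff (f := fun n => |uu n t * b n|) N).2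
        (summable_abs_term hC ht')
      refine this.congr fun j => ?_
      rw [abs_mul, abs_of_nonneg (uu_nonneg _ ht'.le)]
    set Rabs := ∑' j : ℕ, uu (j + N) t * |b (j + N)| with hRabs
    have hRle : |R| ≤ Rabs := by
      have h1 : ‖∑' j : ℕ, uu (j + N) t * b (j + N)‖
          ≤ ∑' j : ℕ, ‖uu (j + N) t * b (j + N)‖ :=
        norm_tsum_le_tsum_norm (by
          refine habs_shift.congr fun j => ?_
          rw [Real.norm_eq_abs, abs_mul, abs_of_nonneg (uu_nonneg _ ht'.le)])
      rw [Real.norm_eq_abs] at h1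
      refine h1.trans_eq (tsum_congr fun j => ?_)
      rw [Real.norm_eq_abs, abs_mul, abs_of_nonneg (uu_nonneg _ ht'.le)]
    have hSle : |SN b N t| ≤ ∑ n ∈ Finset.range N, uu n t * |b n| := by
      refine (Finset.abs_sum_le_sum_abs _ _).trans_eq (Finset.sum_congr rfl fun n _ => ?_)
      rw [abs_mul, abs_of_nonneg (uu_nonneg _ ht'.le)]
    have hsq : (SN b N t)^2 ≤ (gg b t)^2 + 2 * |SN b N t| * |R| := by
      have h1 := neg_abs_le (SN b N t * R)
      have h2 := sq_nonneg R
      have h3 : |SN b N t| * |R| = |SN b N t * R| := (abs_mul _ _).symm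
      rw [hg]
      nlinarith [h1, h2, h3]
    have hdiv : (SN b N t)^2 / t ≤ (gg b t)^2 / t + 2 * |SN b N t| * |R| / t := by
      rw [← add_div]
      exact div_le_div_of_nonneg_right hsq ht'.le
    refine (ENNReal.ofReal_le_ofReal hdiv).trans ?_
    refine (ENNReal.ofReal_add_le).trans ?_
    apply add_le_add_right
    -- cross term
    have hT : 2 * |SN b N t| * |R| / t
        ≤ ∑ n ∈ Finset.range N, 2 * |b n| * (uu n t * Rabs / t) := by
      have hRabs0 : 0 ≤ Rabs := tsum_nonneg fun j =>
        mul_nonneg (uu_nonneg _ ht'.le) (abs_nonneg _)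
      have hstep : 2 * |SN b N t| * |R| / t
          ≤ 2 * (∑ n ∈ Finset.range N, uu n t * |b n|) * Rabs / t := by
        have hm : |SN b N t| * |R| ≤ (∑ n ∈ Finset.range N, uu n t * |b n|) * Rabs :=
          mul_le_mul hSle hRle (abs_nonneg R) ((abs_nonneg _).trans hSle)
        apply div_le_div_of_nonneg_right (by linarith) ht'.le
      refine hstep.trans_eq ?_
      rw [show 2 * (∑ n ∈ Finset.range N, uu n t * |b n|) * Rabs / t
          = ∑ n ∈ Finset.range N, (uu n t * |b n|) * (2 * Rabs / t) by
        rw [← Finset.sum_mul]; ring]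
      exact Finset.sum_congr rfl fun n _ => by ring
    refine (ENNReal.ofReal_le_ofReal hT).trans ?_
    rw [ENNReal.ofReal_sum_of_nonneg (fun n _ => by
      have h0 : 0 ≤ Rabs := tsum_nonneg fun j =>
        mul_nonneg (uu_nonneg _ ht'.le) (abs_nonneg _)
      have h1 : 0 ≤ uu n t := uu_nonneg _ ht'.le
      positivity)]
    simp only [HH]
    apply Finset.sum_le_sum
    intro n _
    have heq : 2 * |b n| * (uu n t * Rabs / t)
        = ∑' j : ℕ, 2 * |b n| * |b (j + N)| * (uu n t * uu (j + N) t / t) := by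
      have h1 : (∑' j : ℕ, (2 * |b n| * uu n t / t) * (uu (j + N) t * |b (j + N)|))
          = (2 * |b n| * uu n t / t) * Rabs := tsum_mul_left
      rw [show 2 * |b n| * (uu n t * Rabs / t) = (2 * |b n| * uu n t / t) * Rabs by ring, ← h1]
      exact tsum_congr fun j => by ring
    rw [heq]
    rw [ENNReal.ofReal_tsum_of_nonneg (fun j => term_nonneg n (j+N) ht' _ (by positivity))
      (by
        refine (habs_shift.mul_left (2 * |b n| * uu n t / t)).congr fun j => ?_
        ring)]
  -- key per-N inequality
  have key : ∀ N : ℕ, ENNReal.ofReal ((7/60) * ∑ n ∈ Finset.range N, (b n)^2)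
      ≤ I + ENNReal.ofReal ((2*C/15) * rho b N) := by
    intro N
    have hQlow : (7/60) * ∑ n ∈ Finset.range N, (b n)^2 ≤ QN b N := by
      have h1 := (abs_le.1 (form_bound b N)).1
      rw [QN]
      linarith
    calc ENNReal.ofReal ((7/60) * ∑ n ∈ Finset.range N, (b n)^2)
        ≤ ENNReal.ofReal (QN b N) := ENNReal.ofReal_le_ofReal hQlow
      _ = ∫⁻ t in Ioi (0:ℝ), ENNReal.ofReal ((SN b N t)^2 / t) := (Q_lintegral b N).symm
      _ ≤ ∫⁻ t in Ioi (0:ℝ), (ENNReal.ofReal ((gg b t)^2 / t) + HH b N t) := by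
          apply lintegral_mono_ae
          exact (ae_restrict_iff' measurableSet_Ioi).2 (ae_of_all _ (hpoint N))
      _ = I + ∫⁻ t in Ioi (0:ℝ), HH b N t := by
          rw [lintegral_add_right _ (measurable_HH b N)]
      _ ≤ I + ENNReal.ofReal ((2*C/15) * rho b N) := add_le_add_right (hHH_int N) _
  -- take limits
  have h1 : Tendsto (fun N => ENNReal.ofReal ((7/60) * ∑ n ∈ Finset.range N, (b n)^2))
      atTop (𝓝 ((7/60 : ℝ≥0∞) * ∑' n : ℕ, ENNReal.ofReal ((b n)^2))) := by
    have heq : ∀ N : ℕ, ENNReal.ofReal ((7/60) * ∑ n ∈ Finset.range N, (b n)^2)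
        = (7/60 : ℝ≥0∞) * ∑ n ∈ Finset.range N, ENNReal.ofReal ((b n)^2) := by
      intro N
      rw [ENNReal.ofReal_mul (by norm_num),
        ENNReal.ofReal_sum_of_nonneg (fun n _ => sq_nonneg _)]
      congr 1
      rw [show ((7:ℝ)/60) = ((7:ℕ):ℝ)/((60:ℕ):ℝ) by norm_num, ofReal_frac _ _ (by norm_num)]
      norm_num
    simp_rw [heq]
    exact ENNReal.Tendsto.const_mul (ENNReal.tendsto_nat_tsum _)
      (Or.inr (by simp [ENNReal.div_eq_top]))
  have h2 : Tendsto (fun N => I + ENNReal.ofReal ((2*C/15) * rho b N))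
      atTop (𝓝 (I + 0)) := by
    apply Tendsto.const_add
    have h3 : Tendsto (fun N => (2*C/15) * rho b N) atTop (𝓝 0) := by
      have := (rho_tendsto hC hb).const_mul (2*C/15)
      simpa using this
    have := ENNReal.tendsto_ofReal h3
    simpa using this
  have := le_of_tendsto_of_tendsto' h1 h2 key
  rwa [add_zero] at this


end Aux10

section Glue

variable {Ω : Type*} [m0 : MeasurableSpace Ω] (μ : Measure Ω) [IsProbabilityMeasure μ]
  (F : ℕ → MeasurableSpace Ω) (f : Ω → ℝ)

lemma dE_eq2 (m : ℕ) :
    dE μ F f (m + 2) = μ[f | F (m + 2)] - μ[f | F (m + 1)] := by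
  funext ω
  have h0 : m + 2 - 1 = m + 1 := by omega
  simp [dE, condE, h0]

lemma aesm_dE (hle : ∀ n, F n ≤ m0) (m : ℕ) :
    AEStronglyMeasurable (dE μ F f (m + 2)) μ := by
  rw [dE_eq2]
  exact ((MeasureTheory.stronglyMeasurable_condExp.mono (hle _)).aestronglyMeasurable.sub
    ((MeasureTheory.stronglyMeasurable_condExp.mono (hle _)).aestronglyMeasurable))

lemma lint_dE_le (hle : ∀ n, F n ≤ m0) (m : ℕ) :
    ∫⁻ ω, ENNReal.ofReal |dE μ F f (m + 2) ω| ∂μ ≤ 2 * eLpNorm f 1 μ := by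
  have h1 : ∫⁻ ω, ENNReal.ofReal |dE μ F f (m + 2) ω| ∂μ
      = eLpNorm (dE μ F f (m + 2)) 1 μ := by
    rw [eLpNorm_one_eq_lintegral_enorm]
    exact lintegral_congr fun ω => (Real.enorm_eq_ofReal_abs _).symm
  rw [h1, dE_eq2]
  have ha : AEStronglyMeasurable (μ[f|F (m+2)]) μ :=
    (MeasureTheory.stronglyMeasurable_condExp.mono (hle (m+2))).aestronglyMeasurable
  have hb : AEStronglyMeasurable (μ[f|F (m+1)]) μ :=
    (MeasureTheory.stronglyMeasurable_condExp.mono (hle (m+1))).aestronglyMeasurable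
  refine (eLpNorm_sub_le ha hb le_rfl).trans ?_
  have h2 := MeasureTheory.eLpNorm_one_condExp_le_eLpNorm (μ := μ) (m := F (m+2)) f
  have h3 := MeasureTheory.eLpNorm_one_condExp_le_eLpNorm (μ := μ) (m := F (m+1)) f
  calc eLpNorm (μ[f|F (m+2)]) 1 μ + eLpNorm (μ[f|F (m+1)]) 1 μ
      ≤ eLpNorm f 1 μ + eLpNorm f 1 μ := add_le_add h2 h3
    _ = 2 * eLpNorm f 1 μ := (two_mul _).symm

lemma dE_tendsto_ae (hle : ∀ n, F n ≤ m0) (hmono : Monotone F) :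
    ∀ᵐ ω ∂μ, Tendsto (fun n => dE μ F f (n + 2) ω) atTop (𝓝 0) := by
  set ℱ : Filtration ℕ m0 := ⟨F, hmono, hle⟩ with hF
  filter_upwards [MeasureTheory.tendsto_ae_condExp (μ := μ) (ℱ := ℱ) f] with ω hω
  have h2 := hω.comp (tendsto_add_atTop_nat 2)
  have h1 := hω.comp (tendsto_add_atTop_nat 1)
  have h3 := h2.sub h1
  rw [sub_self] at h3
  refine Tendsto.congr (fun n => ?_) h3
  have h0 : n + 2 - 1 = n + 1 := by omega
  simp only [Function.comp, dE, condE, h0]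
  norm_num
  rfl

end Glue

/-- For `f ∈ L¹(Ω)` and `t > 0`, the series defining `g_t(f)` converges absolutely `μ`-a.e. and
in `L¹(Ω)`, and `μ`-a.e. on `Ω`:
`(7/60) Σ_{n≥2} |dE_n(f)|² ≤ ∫₀^∞ |g_t(f)|² dt/t ≤ (23/60) Σ_{n≥2} |dE_n(f)|²`. -/




theorem stmt10 {Ω : Type*} [m0 : MeasurableSpace Ω] (μ : Measure Ω) [IsProbabilityMeasure μ]
    (F : ℕ → MeasurableSpace Ω) (hle : ∀ n, F n ≤ m0) (hmono : Monotone F)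
    (f : Ω → ℝ) (hf : Integrable f μ) :
    -- absolute convergence `μ`-a.e.
    (∀ᵐ ω ∂μ, ∀ t : ℝ, 0 < t →
      Summable (fun n : ℕ =>
        |t * 16 ^ (n + 2) * Real.exp (-(16 ^ (n + 2) * t)) * dE μ F f (n + 2) ω|)) ∧
    -- convergence in `L¹(Ω)`
    (∀ t : ℝ, 0 < t →
      Tendsto (fun N : ℕ => eLpNorm
        (fun ω => (∑ n ∈ Finset.range N,
          t * 16 ^ (n + 2) * Real.exp (-(16 ^ (n + 2) * t)) * dE μ F f (n + 2) ω) -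
            gFun μ F f t ω) 1 μ) atTop (𝓝 0)) ∧
    -- the pointwise a.e. two-sided estimate
    (∀ᵐ ω ∂μ,
      (7 / 60 : ℝ≥0∞) * ∑' n : ℕ, ENNReal.ofReal ((dE μ F f (n + 2) ω) ^ 2) ≤
        (∫⁻ t in Ioi (0 : ℝ), ENNReal.ofReal ((gFun μ F f t ω) ^ 2 / t)) ∧
      (∫⁻ t in Ioi (0 : ℝ), ENNReal.ofReal ((gFun μ F f t ω) ^ 2 / t)) ≤
        (23 / 60 : ℝ≥0∞) * ∑' n : ℕ, ENNReal.ofReal ((dE μ F f (n + 2) ω) ^ 2)) := by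
  have htend := dE_tendsto_ae μ F f hle hmono
  have habs : ∀ᵐ ω ∂μ, ∀ t : ℝ, 0 < t → Summable (fun n : ℕ =>
      |t * 16 ^ (n + 2) * Real.exp (-(16 ^ (n + 2) * t)) * dE μ F f (n + 2) ω|) := by
    filter_upwards [htend] with ω hω t ht
    obtain ⟨c, hc⟩ := (hω.abs).bddAbove_range
    have hc' : ∀ n, |dE μ F f (n + 2) ω| ≤ c := fun n => hc (Set.mem_range_self n)
    exact Aux10.summable_abs_term hc' ht
  refine ⟨habs, ?_, ?_⟩
  · -- L¹ convergence
    intro t ht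
    show Tendsto (fun N : ℕ => eLpNorm
        (fun ω => (∑ n ∈ Finset.range N, Aux10.uu n t * dE μ F f (n + 2) ω) -
          gFun μ F f t ω) 1 μ) atTop (𝓝 0)
    set E := 2 * eLpNorm f 1 μ with hEdef
    have hEne : E ≠ ⊤ := ENNReal.mul_ne_top (by norm_num)
      (memLp_one_iff_integrable.2 hf).2.ne
    have hbound : ∀ N : ℕ,
        eLpNorm (fun ω => (∑ n ∈ Finset.range N, Aux10.uu n t * dE μ F f (n + 2) ω) -
            gFun μ F f t ω) 1 μ
        ≤ (∑' j : ℕ, ENNReal.ofReal (Aux10.uu (j + N) t)) * E := by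
      intro N
      rw [eLpNorm_one_eq_lintegral_enorm]
      have hpt : ∀ᵐ ω ∂μ, ‖(∑ n ∈ Finset.range N, Aux10.uu n t * dE μ F f (n + 2) ω) -
            gFun μ F f t ω‖ₑ
          ≤ ∑' j : ℕ, ENNReal.ofReal (Aux10.uu (j + N) t * |dE μ F f (j + N + 2) ω|) := by
        filter_upwards [habs] with ω hω
        have hsabs : Summable fun n => |Aux10.uu n t * dE μ F f (n + 2) ω| := hω t ht
        have hs : Summable fun n => Aux10.uu n t * dE μ F f (n + 2) ω := hsabs.of_abs
        have hshift_abs : Summable fun j =>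
            Aux10.uu (j + N) t * |dE μ F f (j + N + 2) ω| := by
          have h4 := (summable_nat_add_iff
            (f := fun n => |Aux10.uu n t * dE μ F f (n + 2) ω|) N).2 hsabs
          refine h4.congr fun j => ?_
          rw [abs_mul, abs_of_nonneg (Aux10.uu_nonneg _ ht.le)]
        have hgeq : gFun μ F f t ω
            = (∑ n ∈ Finset.range N, Aux10.uu n t * dE μ F f (n + 2) ω)
              + ∑' j : ℕ, Aux10.uu (j + N) t * dE μ F f (j + N + 2) ω :=
          (Summable.sum_add_tsum_nat_add N hs).symm
        have hkey : (∑ n ∈ Finset.range N, Aux10.uu n t * dE μ F f (n + 2) ω) -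
              gFun μ F f t ω
            = -(∑' j : ℕ, Aux10.uu (j + N) t * dE μ F f (j + N + 2) ω) := by
          rw [hgeq]; ring
        rw [hkey, enorm_neg, Real.enorm_eq_ofReal_abs]
        have hRle : |∑' j : ℕ, Aux10.uu (j + N) t * dE μ F f (j + N + 2) ω|
            ≤ ∑' j : ℕ, Aux10.uu (j + N) t * |dE μ F f (j + N + 2) ω| := by
          have h5 : ‖∑' j : ℕ, Aux10.uu (j + N) t * dE μ F f (j + N + 2) ω‖
              ≤ ∑' j : ℕ, ‖Aux10.uu (j + N) t * dE μ F f (j + N + 2) ω‖ :=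
            norm_tsum_le_tsum_norm (by
              refine hshift_abs.congr fun j => ?_
              rw [Real.norm_eq_abs, abs_mul, abs_of_nonneg (Aux10.uu_nonneg _ ht.le)])
          rw [Real.norm_eq_abs] at h5
          refine h5.trans_eq (tsum_congr fun j => ?_)
          rw [Real.norm_eq_abs, abs_mul, abs_of_nonneg (Aux10.uu_nonneg _ ht.le)]
        refine (ENNReal.ofReal_le_ofReal hRle).trans_eq ?_
        exact ENNReal.ofReal_tsum_of_nonneg
          (fun j => mul_nonneg (Aux10.uu_nonneg _ ht.le) (abs_nonneg _)) hshift_abs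
      refine (lintegral_mono_ae hpt).trans ?_
      have hmeasj : ∀ j : ℕ, AEMeasurable
          (fun ω => ENNReal.ofReal (Aux10.uu (j + N) t * |dE μ F f (j + N + 2) ω|)) μ :=
        fun j => (((aesm_dE μ F f hle (j + N)).norm.aemeasurable).const_mul
          (Aux10.uu (j + N) t)).ennreal_ofReal
      rw [lintegral_tsum hmeasj]
      have hper : ∀ j : ℕ,
          ∫⁻ ω, ENNReal.ofReal (Aux10.uu (j + N) t * |dE μ F f (j + N + 2) ω|) ∂μ
          ≤ ENNReal.ofReal (Aux10.uu (j + N) t) * E := by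
        intro j
        have h1 : ∀ ω, ENNReal.ofReal (Aux10.uu (j + N) t * |dE μ F f (j + N + 2) ω|)
            = ENNReal.ofReal (Aux10.uu (j + N) t)
              * ENNReal.ofReal |dE μ F f (j + N + 2) ω| :=
          fun ω => ENNReal.ofReal_mul (Aux10.uu_nonneg _ ht.le)
        simp_rw [h1]
        rw [lintegral_const_mul' _ _ ENNReal.ofReal_ne_top]
        exact mul_le_mul_right (lint_dE_le μ F f hle (j + N)) _
      refine (ENNReal.tsum_le_tsum hper).trans ?_
      rw [ENNReal.tsum_mul_right]
    have hsum_ne : (∑' n : ℕ, ENNReal.ofReal (Aux10.uu n t)) ≠ ⊤ := by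
      rw [← ENNReal.ofReal_tsum_of_nonneg (fun n => Aux10.uu_nonneg n ht.le)
        (Aux10.summable_uu ht)]
      exact ENNReal.ofReal_ne_top
    have hphi : Tendsto (fun N : ℕ => (∑' j : ℕ, ENNReal.ofReal (Aux10.uu (j + N) t)) * E)
        atTop (𝓝 0) := by
      have h6 := ENNReal.tendsto_sum_nat_add (fun n => ENNReal.ofReal (Aux10.uu n t)) hsum_ne
      have h7 := ENNReal.Tendsto.mul_const h6 (Or.inr hEne)
      rwa [zero_mul] at h7
    exact tendsto_of_tendsto_of_tendsto_of_le_of_le tendsto_const_nhds hphi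
      (fun N => zero_le) hbound
  · -- pointwise two-sided bound
    filter_upwards [htend] with ω hω
    obtain ⟨c, hc⟩ := (hω.abs).bddAbove_range
    have hc' : ∀ n, |dE μ F f (n + 2) ω| ≤ c := fun n => hc (Set.mem_range_self n)
    exact ⟨Aux10.core_lower hc' hω, Aux10.core_upper hc'⟩
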